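/- For all integers $D_i \geq 1$, $d_i \geq 0$, and $D \geq 4$ divisible by 4, we have $\frac{(D_i+d_i)!}{D_i!} \leq \left(1+\frac{4d_i}{D}\right)^{D_i - D/4} \cdot \frac{(D/4+d_i)!}{(D/4)!}$. -/

import Mathlib

private lemma aux_step_up (Q di m : ℕ) (hQ : 1 ≤ Q) (hm : Q ≤ m + 1)
    (ih : ((m + di).factorial : ℝ) / m.factorial ≤
      (((Q : ℝ) + di) / Q) ^ ((m : ℤ) - (Q : ℤ)) * ((Q + di).factorial / Q.factorial)) :
    ((m + 1 + di).factorial : ℝ) / (m + 1).factorial ≤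
      (((Q : ℝ) + di) / Q) ^ ((m + 1 : ℤ) - (Q : ℤ)) * ((Q + di).factorial / Q.factorial) := by
  have hQ0 : (0 : ℝ) < Q := by exact_mod_cast hQ
  have hr : (0 : ℝ) < ((Q : ℝ) + di) / Q := by positivity
  have h1 : (m + 1 + di) = (m + di) + 1 := by omega
  have h2 : ((m + 1 + di).factorial : ℝ) = (m + di + 1) * (m + di).factorial := by
    rw [h1, Nat.factorial_succ]; push_cast; ring
  have h3 : (((m + 1).factorial : ℝ)) = (m + 1) * m.factorial := by
    rw [Nat.factorial_succ]; push_cast; ring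
  have hfac : (0 : ℝ) < m.factorial := by exact_mod_cast m.factorial_pos
  have hm1 : (0 : ℝ) < (m : ℝ) + 1 := by positivity
  -- ratio bound
  have hrat : ((m : ℝ) + di + 1) / ((m : ℝ) + 1) ≤ ((Q : ℝ) + di) / Q := by
    rw [div_le_div_iff₀ hm1 hQ0]
    have : (Q : ℝ) ≤ (m : ℝ) + 1 := by exact_mod_cast hm
    nlinarith [Nat.cast_nonneg (α := ℝ) di]
  have hzp : (((Q : ℝ) + di) / Q) ^ ((m + 1 : ℤ) - (Q : ℤ)) =
      (((Q : ℝ) + di) / Q) ^ ((m : ℤ) - (Q : ℤ)) * (((Q : ℝ) + di) / Q) := by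
    rw [← zpow_add_one₀ (ne_of_gt hr)]; ring_nf
  rw [h2, h3, hzp]
  have key : ((m + 1 + di).factorial : ℝ) / (m + 1).factorial =
      ((m + di).factorial / m.factorial) * (((m : ℝ) + di + 1) / ((m : ℝ) + 1)) := by
    rw [h2, h3]; field_simp
  calc ((m : ℝ) + di + 1) * (m + di).factorial / (((m : ℝ) + 1) * m.factorial)
      = ((m + di).factorial / m.factorial) * (((m : ℝ) + di + 1) / ((m : ℝ) + 1)) := by
        field_simp
    _ ≤ ((((Q : ℝ) + di) / Q) ^ ((m : ℤ) - (Q : ℤ)) * ((Q + di).factorial / Q.factorial)) *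
        (((Q : ℝ) + di) / Q) := by
        apply mul_le_mul ih hrat (by positivity)
        positivity
    _ = (((Q : ℝ) + di) / Q) ^ ((m : ℤ) - (Q : ℤ)) * (((Q : ℝ) + di) / Q) *
        ((Q + di).factorial / Q.factorial) := by ring

private lemma aux_step_down (Q di m : ℕ) (hQ : 1 ≤ Q) (hm : m + 1 ≤ Q)
    (ih : ((m + 1 + di).factorial : ℝ) / (m + 1).factorial ≤
      (((Q : ℝ) + di) / Q) ^ ((m + 1 : ℤ) - (Q : ℤ)) * ((Q + di).factorial / Q.factorial)) :
    ((m + di).factorial : ℝ) / m.factorial ≤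
      (((Q : ℝ) + di) / Q) ^ ((m : ℤ) - (Q : ℤ)) * ((Q + di).factorial / Q.factorial) := by
  have hQ0 : (0 : ℝ) < Q := by exact_mod_cast hQ
  have hr : (0 : ℝ) < ((Q : ℝ) + di) / Q := by positivity
  have h1 : (m + 1 + di) = (m + di) + 1 := by omega
  have h2 : ((m + 1 + di).factorial : ℝ) = ((m : ℝ) + di + 1) * (m + di).factorial := by
    rw [h1, Nat.factorial_succ]; push_cast; ring
  have h3 : (((m + 1).factorial : ℝ)) = ((m : ℝ) + 1) * m.factorial := by
    rw [Nat.factorial_succ]; push_cast; ring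
  have hfac : (0 : ℝ) < m.factorial := by exact_mod_cast m.factorial_pos
  have hmdi : (0 : ℝ) < (m : ℝ) + di + 1 := by positivity
  have hrat : ((m : ℝ) + 1) / ((m : ℝ) + di + 1) ≤ (Q : ℝ) / ((Q : ℝ) + di) := by
    rw [div_le_div_iff₀ hmdi (by positivity)]
    have : (m : ℝ) + 1 ≤ (Q : ℝ) := by exact_mod_cast hm
    nlinarith [Nat.cast_nonneg (α := ℝ) di]
  have hzp : (((Q : ℝ) + di) / Q) ^ ((m : ℤ) - (Q : ℤ)) =
      (((Q : ℝ) + di) / Q) ^ ((m + 1 : ℤ) - (Q : ℤ)) * ((Q : ℝ) / ((Q : ℝ) + di)) := by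
    have h4 : ((m : ℤ) - (Q : ℤ)) = ((m + 1 : ℤ) - (Q : ℤ)) + (-1) := by ring
    rw [h4, zpow_add₀ (ne_of_gt hr), zpow_neg, zpow_one, inv_div]
  have key : ((m + di).factorial : ℝ) / m.factorial =
      ((m + 1 + di).factorial / (m + 1).factorial) * (((m : ℝ) + 1) / ((m : ℝ) + di + 1)) := by
    rw [h2, h3]; field_simp
  rw [key, hzp]
  have hL : (0 : ℝ) ≤ ((m + 1 + di).factorial : ℝ) / (m + 1).factorial := by positivity
  calc ((m + 1 + di).factorial : ℝ) / (m + 1).factorial * (((m : ℝ) + 1) / ((m : ℝ) + di + 1))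
      ≤ ((((Q : ℝ) + di) / Q) ^ ((m + 1 : ℤ) - (Q : ℤ)) * ((Q + di).factorial / Q.factorial)) *
        ((Q : ℝ) / ((Q : ℝ) + di)) := by
        apply mul_le_mul ih hrat (by positivity)
        positivity
    _ = (((Q : ℝ) + di) / Q) ^ ((m + 1 : ℤ) - (Q : ℤ)) * ((Q : ℝ) / ((Q : ℝ) + di)) *
        ((Q + di).factorial / Q.factorial) := by ring

private lemma aux_main (Q di : ℕ) (hQ : 1 ≤ Q) (n : ℕ) :
    ((n + di).factorial : ℝ) / n.factorial ≤
      (((Q : ℝ) + di) / Q) ^ ((n : ℤ) - (Q : ℤ)) * ((Q + di).factorial / Q.factorial) := by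
  have base : ((Q + di).factorial : ℝ) / Q.factorial ≤
      (((Q : ℝ) + di) / Q) ^ ((Q : ℤ) - (Q : ℤ)) * ((Q + di).factorial / Q.factorial) := by
    simp
  rcases le_or_gt Q n with h | h
  · -- upward induction from Q
    obtain ⟨k, rfl⟩ := Nat.exists_eq_add_of_le h
    clear h
    induction k with
    | zero => simpa using base
    | succ k ih =>
      have := aux_step_up Q di (Q + k) hQ (by omega) ih
      rw [show Q + (k + 1) = Q + k + 1 by omega]
      convert this using 3 <;> omega
  · -- downward induction from Q
    obtain ⟨k, hk⟩ : ∃ k, n + k = Q := ⟨Q - n, by omega⟩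
    clear h
    induction k generalizing n with
    | zero => simp only [Nat.add_zero] at hk; subst hk; simpa using base
    | succ k ih =>
      have ih' := ih (n + 1) (by omega)
      have := aux_step_down Q di n hQ (by omega) (by convert ih' using 3 <;> push_cast <;> omega)
      convert this using 3

theorem stmt1 (D Di di : ℕ) (hDi : 1 ≤ Di) (hD : 4 ≤ D) (hD4 : 4 ∣ D) :
    ((Di + di).factorial : ℝ) / (Di.factorial : ℝ) ≤
      (1 + 4 * (di : ℝ) / (D : ℝ)) ^ ((Di : ℝ) - (D : ℝ) / 4) *
        (((D / 4 + di).factorial : ℝ) / ((D / 4).factorial : ℝ)) := by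
  set Q := D / 4 with hQdef
  have hDQ : D = 4 * Q := by
    have := Nat.div_mul_cancel hD4
    omega
  have hQ : 1 ≤ Q := by omega
  have hQ0 : (0 : ℝ) < Q := by exact_mod_cast hQ
  have hbase : (1 + 4 * (di : ℝ) / (D : ℝ)) = ((Q : ℝ) + di) / Q := by
    have hD' : (D : ℝ) = 4 * Q := by exact_mod_cast hDQ
    rw [hD']
    field_simp
  have hexp : ((Di : ℝ) - (D : ℝ) / 4) = (((Di : ℤ) - (Q : ℤ) : ℤ) : ℝ) := by
    have hD' : (D : ℝ) = 4 * Q := by exact_mod_cast hDQ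
    rw [hD']
    push_cast
    ring
  rw [hbase, hexp, Real.rpow_intCast]
  exact aux_main Q di hQ Di
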